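/- For every integer k ≥ 6 and every natural number N, there exists a finite simple graph G with at least N vertices such that G contains no subgraph isomorphic to K_5, G contains no cycle of length ℓ for any ℓ with 6 ≤ ℓ ≤ k, and the chromatic number of G is exactly 5 (in particular, G is not 4-colorable and hence not 4-choosable). -/

import Mathlib

open SimpleGraph

namespace Stmt12

/-- edge relation on values: same-gadget edge or the twist edge -/
def A (r x y : ℕ) : Prop :=
  x < y ∧ ((x / 4 = (y - 1) / 4 ∧ ¬(x % 4 = 0 ∧ y % 4 = 0)) ∨ (x = 0 ∧ y = 4 * r))

def gph (r : ℕ) : SimpleGraph (Fin (4 * r + 1)) where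
  Adj u v := A r u v ∨ A r v u
  symm := by constructor; intro u v h; exact h.symm
  loopless := by constructor; intro u h; rcases h with ⟨h, -⟩ | ⟨h, -⟩ <;> exact lt_irrefl _ h

lemma adj_iff {r : ℕ} {u v : Fin (4*r+1)} :
    (gph r).Adj u v ↔ A r u v ∨ A r v u := Iff.rfl

/-- vertex from a value -/
def vt (r x : ℕ) : Fin (4 * r + 1) := ⟨x % (4 * r + 1), Nat.mod_lt _ (by omega)⟩

lemma val_vt {r x : ℕ} (h : x ≤ 4 * r) : ((vt r x : Fin (4*r+1)) : ℕ) = x :=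
  Nat.mod_eq_of_lt (by omega)

lemma adj_vt {r x y : ℕ} (hx : x ≤ 4*r) (hy : y ≤ 4*r) (h : A r x y) :
    (gph r).Adj (vt r x) (vt r y) := by
  rw [adj_iff]
  left
  show A r ((vt r x : Fin _) : ℕ) ((vt r y : Fin _) : ℕ)
  rw [val_vt hx, val_vt hy]
  exact h

lemma fin4_eq : ∀ x y a b c : Fin 4, x ≠ a → x ≠ b → x ≠ c → y ≠ a → y ≠ b → y ≠ c →
    a ≠ b → a ≠ c → b ≠ c → x = y := by decide


/-- color value -/
def cv (x : ℕ) : ℕ := if x = 0 then 4 else x % 4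

lemma cv_lt (x : ℕ) : cv x < 5 := by unfold cv; split <;> omega

lemma cv_ne {r x y : ℕ} (hr : 1 ≤ r) (h : A r x y) : cv x ≠ cv y := by
  obtain ⟨hlt, hc⟩ := h
  rcases hc with ⟨h1, h2⟩ | ⟨h1, h2⟩ <;> unfold cv <;> split_ifs <;> omega

lemma colorable5 (r : ℕ) (hr : 1 ≤ r) : (gph r).Colorable 5 := by
  refine ⟨Coloring.mk (fun u => ⟨cv u, cv_lt _⟩) ?_⟩
  intro u v hadj
  rcases (adj_iff.mp hadj) with h | h
  · exact fun hc => cv_ne hr h (by simpa [Fin.mk.injEq] using hc)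
  · exact fun hc => cv_ne hr h (by simpa [Fin.mk.injEq] using hc.symm)

lemma not_colorable4 (r : ℕ) (hr : 1 ≤ r) : ¬ (gph r).Colorable 4 := by
  rintro ⟨C⟩
  have key : ∀ i, i ≤ r → C (vt r (4 * i)) = C (vt r 0) := by
    intro i
    induction i with
    | zero => intro _; norm_num
    | succ j ih =>
      intro hj
      have hj' : j ≤ r := by omega
      have e4 : 4 * (j + 1) = 4 * j + 4 := by ring
      rw [e4]
      have hA1 : A r (4*j+1) (4*j+2) := by unfold A; omega
      have hA2 : A r (4*j+1) (4*j+3) := by unfold A; omega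
      have hA3 : A r (4*j+2) (4*j+3) := by unfold A; omega
      have hs1 : A r (4*j) (4*j+1) := by unfold A; omega
      have hs2 : A r (4*j) (4*j+2) := by unfold A; omega
      have hs3 : A r (4*j) (4*j+3) := by unfold A; omega
      have ht1 : A r (4*j+1) (4*j+4) := by unfold A; omega
      have ht2 : A r (4*j+2) (4*j+4) := by unfold A; omega
      have ht3 : A r (4*j+3) (4*j+4) := by unfold A; omega
      have bb : ∀ t, t ≤ 4 → 4*j + t ≤ 4*r := by omega
      have hx : C (vt r (4*j+4)) = C (vt r (4*j)) := by
        apply fin4_eq _ _ (C (vt r (4*j+1))) (C (vt r (4*j+2))) (C (vt r (4*j+3)))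
        · exact (C.valid (adj_vt (bb 1 (by omega)) (bb 4 (by omega)) ht1)).symm
        · exact (C.valid (adj_vt (bb 2 (by omega)) (bb 4 (by omega)) ht2)).symm
        · exact (C.valid (adj_vt (bb 3 (by omega)) (bb 4 (by omega)) ht3)).symm
        · exact (C.valid (adj_vt (bb 0 (by omega)) (bb 1 (by omega)) hs1))
        · exact (C.valid (adj_vt (bb 0 (by omega)) (bb 2 (by omega)) hs2))
        · exact (C.valid (adj_vt (bb 0 (by omega)) (bb 3 (by omega)) hs3))
        · exact (C.valid (adj_vt (bb 1 (by omega)) (bb 2 (by omega)) hA1))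
        · exact (C.valid (adj_vt (bb 1 (by omega)) (bb 3 (by omega)) hA2))
        · exact (C.valid (adj_vt (bb 2 (by omega)) (bb 3 (by omega)) hA3))
      rw [hx]
      exact ih hj'
  have htw : (gph r).Adj (vt r 0) (vt r (4*r)) :=
    adj_vt (by omega) (le_refl _) ⟨by omega, Or.inr ⟨rfl, rfl⟩⟩
  exact C.valid htw (key r (le_refl _)).symm


lemma noK5 (r : ℕ) (hr : 7 ≤ r) :
    ¬ ∃ f : Fin 5 → Fin (4*r+1), Function.Injective f ∧
      ∀ i j : Fin 5, i ≠ j → (gph r).Adj (f i) (f j) := by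
  rintro ⟨f, hinj, hadj⟩
  set s : Finset ℕ := Finset.univ.image (fun i => ((f i : ℕ))) with hs
  have hinj' : Function.Injective (fun i => ((f i : ℕ))) :=
    fun i j h => hinj (Fin.val_injective h)
  have hcard : s.card = 5 := by
    rw [hs, Finset.card_image_of_injective _ hinj', Finset.card_univ, Fintype.card_fin]
  have hmem : ∀ x ∈ s, ∃ i, ((f i : ℕ)) = x := by
    intro x hx
    obtain ⟨i, -, hi⟩ := Finset.mem_image.mp hx
    exact ⟨i, hi⟩
  have hub : ∀ x ∈ s, x ≤ 4*r := by
    intro x hx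
    obtain ⟨i, hi⟩ := hmem x hx
    have := (f i).isLt
    omega
  have hpair : ∀ x ∈ s, ∀ y ∈ s, x ≠ y → A r x y ∨ A r y x := by
    intro x hx y hy hxy
    obtain ⟨i, hi⟩ := hmem x hx
    obtain ⟨j, hj⟩ := hmem y hy
    have hij : i ≠ j := by rintro rfl; rw [hi] at hj; exact hxy hj
    have := hadj i j hij
    rw [adj_iff] at this
    rwa [hi, hj] at this
  have hne : s.Nonempty := by rw [← Finset.card_pos, hcard]; omega
  set m := s.min' hne with hm
  set M := s.max' hne with hM
  have hmem_m : m ∈ s := s.min'_mem hne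
  have hmem_M : M ∈ s := s.max'_mem hne
  have hMm : m + 4 ≤ M := by
    by_contra hcon
    have hsub : s ⊆ Finset.Icc m M := by
      intro z hz
      exact Finset.mem_Icc.mpr ⟨s.min'_le z hz, s.le_max' z hz⟩
    have := Finset.card_le_card hsub
    rw [hcard, Nat.card_Icc] at this
    omega
  have hAmM : A r m M := by
    rcases hpair m hmem_m M hmem_M (by omega) with h | h
    · exact h
    · exact absurd h.1 (by omega)
  rcases hAmM.2 with ⟨hdiv, hmod⟩ | ⟨h0, hR⟩
  · omega
  · -- twist case: m = 0, M = 4r, pick middle element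
    have hc3 : 0 < ((s.erase m).erase M).card := by
      have h1 : (s.erase m).card = 4 := by rw [Finset.card_erase_of_mem hmem_m, hcard]
      have hM' : M ∈ s.erase m := Finset.mem_erase.mpr ⟨by omega, hmem_M⟩
      rw [Finset.card_erase_of_mem hM', h1]
      omega
    obtain ⟨y, hy⟩ := Finset.card_pos.mp hc3
    obtain ⟨hyM, hy'⟩ := Finset.mem_erase.mp hy
    obtain ⟨hym, hys⟩ := Finset.mem_erase.mp hy'
    have hmy : m ≤ y := s.min'_le y hys
    have hyM' : y ≤ M := s.le_max' y hys
    have h1 : A r m y := by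
      rcases hpair m hmem_m y hys (Ne.symm hym) with h | h
      · exact h
      · exact absurd h.1 (by omega)
    have h2 : A r y M := by
      rcases hpair y hys M hmem_M hyM with h | h
      · exact h
      · exact absurd h.1 (by omega)
    rcases h1.2 with ⟨hd1, -⟩ | ⟨-, hR1⟩
    · rcases h2.2 with ⟨hd2, -⟩ | ⟨h02, -⟩
      · have hy1 := h1.1
        have hy2 := h2.1
        omega
      · omega
    · omega


lemma cycle_short_or_long (r : ℕ) (hr : 7 ≤ r) {v : Fin (4*r+1)}
    (W : (gph r).Walk v v) (hW : W.IsCycle) :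
    W.length ≤ 5 ∨ r ≤ W.length := by
  classical
  by_cases htw : s(vt r 0, vt r (4*r)) ∈ W.edges
  · -- long case
    right
    have hv0 : vt r 0 ∈ W.support := W.fst_mem_support_of_mem_edges htw
    set W' := W.rotate _ hv0 with hW'def
    have hW' : W'.IsCycle := hW.rotate hv0
    have hlen' : W'.length = W.length := by
      have h1 := (W.rotate_darts _ hv0).perm.length_eq
      rw [← Walk.length_darts W', ← Walk.length_darts W]
      exact h1
    have htw' : s(vt r 0, vt r (4*r)) ∈ W'.edges :=
      (W.rotate_edges _ hv0).mem_iff.mpr htw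
    have hvR' : vt r (4*r) ∈ W'.support := W'.snd_mem_support_of_mem_edges htw'
    obtain ⟨d0, hd0, hd0e⟩ := List.mem_map.mp htw'
    have hndE : W'.edges.Nodup := hW'.isCircuit.isTrail.edges_nodup
    have hinjE : ∀ d₁ ∈ W'.darts, ∀ d₂ ∈ W'.darts, d₁.edge = d₂.edge → d₁ = d₂ :=
      List.inj_on_of_nodup_map hndE
    set p := W'.takeUntil (vt r (4*r)) hvR' with hp
    set q := W'.dropUntil (vt r (4*r)) hvR' with hq
    have hv0lt : ((vt r 0 : Fin _) : ℕ) = 0 := val_vt (by omega)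
    have hvRlt : ((vt r (4*r) : Fin _) : ℕ) = 4*r := val_vt (le_refl _)
    rcases dart_edge_eq_mk'_iff'.mp hd0e with ⟨hf0, hsR⟩ | ⟨hfR, hs0⟩
    · -- d0 goes 0 → 4r ; for each b there is a dart with fst = 4b coming back
      have claim : ∀ b, 1 ≤ b → b ≤ r → ∃ d ∈ W'.darts, ((d.fst : Fin _) : ℕ) = 4*b := by
        intro b hb1 hb2
        obtain ⟨d2, hd2, hd2f, hd2s⟩ := q.exists_boundary_dart {u : Fin (4*r+1) | (u : ℕ) < 4*b}ᶜ
          (by simp only [Set.mem_compl_iff, Set.mem_setOf_eq]; omega)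
          (by simp only [Set.mem_compl_iff, Set.mem_setOf_eq]; omega)
        simp only [Set.mem_compl_iff, Set.mem_setOf_eq, not_not, not_lt] at hd2f hd2s
        refine ⟨d2, W'.darts_dropUntil_subset _ hd2, ?_⟩
        rcases (adj_iff.mp d2.adj) with hA | hA
        · exact absurd hA.1 (by omega)
        · rcases hA.2 with ⟨hdiv, -⟩ | ⟨hz, hfr⟩
          · have := hA.1; omega
          · exfalso
            have hde : d2.edge = d0.edge := by
              rw [hd0e, dart_edge_eq_mk'_iff']
              right
              constructor
              · exact Fin.val_injective (by rw [hvRlt]; exact hfr)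
              · exact Fin.val_injective (by rw [hv0lt]; exact hz)
            have : d2 = d0 := hinjE d2 (W'.darts_dropUntil_subset _ hd2) d0 hd0 hde
            rw [this, hf0] at hfr
            rw [hv0lt] at hfr
            omega
      -- counting
      have hsurj : Set.SurjOn (fun d : (gph r).Dart => ((d.fst : Fin _) : ℕ))
          (W'.darts.toFinset : Set ((gph r).Dart))
          (((Finset.Icc 1 r).image (fun b => 4*b)) : Set ℕ) := by
        intro a ha
        simp only [Finset.coe_image, Set.mem_image, Finset.mem_coe, Finset.mem_Icc] at ha
        obtain ⟨b, ⟨hb1, hb2⟩, rfl⟩ := ha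
        obtain ⟨d, hd, hdf⟩ := claim b hb1 hb2
        exact ⟨d, by simpa using hd, hdf⟩
      have hcount := Finset.card_le_card_of_surjOn _ hsurj
      rw [Finset.card_image_of_injOn (fun a _ b _ h => by omega), Nat.card_Icc] at hcount
      have h2 : W'.darts.toFinset.card ≤ W'.darts.length := W'.darts.toFinset_card_le
      rw [Walk.length_darts] at h2
      omega
    · -- d0 goes 4r → 0; use forward darts with snd = 4b
      have claim : ∀ b, 1 ≤ b → b ≤ r → ∃ d ∈ W'.darts, ((d.snd : Fin _) : ℕ) = 4*b := by
        intro b hb1 hb2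
        obtain ⟨d2, hd2, hd2f, hd2s⟩ := p.exists_boundary_dart {u : Fin (4*r+1) | (u : ℕ) < 4*b}
          (by simp only [Set.mem_setOf_eq]; omega)
          (by simp only [Set.mem_setOf_eq]; omega)
        simp only [Set.mem_setOf_eq, not_lt] at hd2f hd2s
        refine ⟨d2, W'.darts_takeUntil_subset _ hd2, ?_⟩
        rcases (adj_iff.mp d2.adj) with hA | hA
        · rcases hA.2 with ⟨hdiv, -⟩ | ⟨hz, hfr⟩
          · have := hA.1; omega
          · exfalso
            have hde : d2.edge = d0.edge := by
              rw [hd0e, dart_edge_eq_mk'_iff']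
              left
              constructor
              · exact Fin.val_injective (by rw [hv0lt]; exact hz)
              · exact Fin.val_injective (by rw [hvRlt]; exact hfr)
            have : d2 = d0 := hinjE d2 (W'.darts_takeUntil_subset _ hd2) d0 hd0 hde
            rw [this, hs0] at hfr
            rw [hv0lt] at hfr
            omega
        · exact absurd hA.1 (by omega)
      have hsurj : Set.SurjOn (fun d : (gph r).Dart => ((d.snd : Fin _) : ℕ))
          (W'.darts.toFinset : Set ((gph r).Dart))
          (((Finset.Icc 1 r).image (fun b => 4*b)) : Set ℕ) := by
        intro a ha
        simp only [Finset.coe_image, Set.mem_image, Finset.mem_coe, Finset.mem_Icc] at ha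
        obtain ⟨b, ⟨hb1, hb2⟩, rfl⟩ := ha
        obtain ⟨d, hd, hdf⟩ := claim b hb1 hb2
        exact ⟨d, by simpa using hd, hdf⟩
      have hcount := Finset.card_le_card_of_surjOn _ hsurj
      rw [Finset.card_image_of_injOn (fun a _ b _ h => by omega), Nat.card_Icc] at hcount
      have h2 : W'.darts.toFinset.card ≤ W'.darts.length := W'.darts.toFinset_card_le
      rw [Walk.length_darts] at h2
      omega
  · -- short case
    left
    by_contra hcon
    push_neg at hcon
    have hlen : 6 ≤ W.length := hcon
    obtain ⟨hcirc, hne, hnd⟩ := (Walk.isCycle_def W).mp hW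
    set L : List ℕ := W.support.tail.map Fin.val with hL
    have hLnd : L.Nodup := hnd.map Fin.val_injective
    have hLlen : L.length = W.length := by
      rw [hL, List.length_map, List.length_tail, Walk.length_support]
      omega
    set T := L.toFinset with hT
    have hTcard : T.card = W.length := by
      rw [hT, List.toFinset_card_of_nodup hLnd, hLlen]
    have hTne : T.Nonempty := by
      rw [← Finset.card_pos, hTcard]; omega
    set m := T.min' hTne with hm
    set M := T.max' hTne with hMdef
    have hmem_m : m ∈ T := T.min'_mem hTne
    have hmem_M : M ∈ T := T.max'_mem hTne
    have hub : ∀ z ∈ T, z ≤ 4*r := by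
      intro z hz
      rw [hT, List.mem_toFinset, hL, List.mem_map] at hz
      obtain ⟨u, -, rfl⟩ := hz
      have := u.isLt; omega
    have hMm : m + 5 ≤ M := by
      by_contra hcc
      have hsub : T ⊆ Finset.Icc m M := by
        intro z hz
        exact Finset.mem_Icc.mpr ⟨T.min'_le z hz, T.le_max' z hz⟩
      have := Finset.card_le_card hsub
      rw [hTcard, Nat.card_Icc] at this
      omega
    set b := m / 4 + 1 with hb
    have hb1 : m < 4*b := by omega
    have hb2 : 4*b < M := by omega
    -- get vertices x (value m) and y (value M) in W.support.tail
    obtain ⟨x, hxmem, hxval⟩ := List.mem_map.mp (List.mem_toFinset.mp hmem_m)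
    obtain ⟨y, hymem, hyval⟩ := List.mem_map.mp (List.mem_toFinset.mp hmem_M)
    have hxs : x ∈ W.support := List.mem_of_mem_tail hxmem
    set W' := W.rotate _ hxs with hW'def
    have hW' : W'.IsCycle := hW.rotate hxs
    obtain ⟨hcirc', hne', hnd'⟩ := (Walk.isCycle_def W').mp hW'
    have htw' : s(vt r 0, vt r (4*r)) ∉ W'.edges := fun hc =>
      htw ((W.rotate_edges _ hxs).mem_iff.mp hc)
    have hyt' : y ∈ W'.support.tail := (W.support_rotate _ hxs).mem_iff.mpr hymem
    have hy' : y ∈ W'.support := List.mem_of_mem_tail hyt'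
    set p := W'.takeUntil y hy' with hpdef
    set q := W'.dropUntil y hy' with hqdef
    have happ : p.append q = W' := W'.take_spec hy'
    -- forward boundary dart in p
    obtain ⟨d1, hd1, hd1f, hd1s⟩ := p.exists_boundary_dart {u : Fin (4*r+1) | (u : ℕ) < 4*b}
      (by simp only [Set.mem_setOf_eq]; omega)
      (by simp only [Set.mem_setOf_eq]; omega)
    simp only [Set.mem_setOf_eq, not_lt] at hd1f hd1s
    have hnotwist : ∀ d : (gph r).Dart, d ∈ W'.darts →
        ¬(((d.fst : Fin (4*r+1)) : ℕ) = 0 ∧ ((d.snd : Fin (4*r+1)) : ℕ) = 4*r) ∧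
        ¬(((d.fst : Fin (4*r+1)) : ℕ) = 4*r ∧ ((d.snd : Fin (4*r+1)) : ℕ) = 0) := by
      intro d hd
      have hmemE : d.edge ∈ W'.edges := List.mem_map_of_mem hd
      constructor
      · rintro ⟨h1, h2⟩
        apply htw'
        have he : d.edge = s(vt r 0, vt r (4*r)) := by
          rw [dart_edge_eq_mk'_iff']
          left
          refine ⟨Fin.val_injective ?_, Fin.val_injective ?_⟩
          · rw [val_vt (by omega : (0:ℕ) ≤ 4*r)]; exact h1
          · rw [val_vt (le_refl (4*r))]; exact h2
        rwa [he] at hmemE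
      · rintro ⟨h1, h2⟩
        apply htw'
        have he : d.edge = s(vt r 0, vt r (4*r)) := by
          rw [dart_edge_eq_mk'_iff']
          right
          refine ⟨Fin.val_injective ?_, Fin.val_injective ?_⟩
          · rw [val_vt (le_refl (4*r))]; exact h1
          · rw [val_vt (by omega : (0:ℕ) ≤ 4*r)]; exact h2
        rwa [he] at hmemE
    have hd1W : d1 ∈ W'.darts := W'.darts_takeUntil_subset _ hd1
    have h1snd : ((d1.snd : Fin (4*r+1)) : ℕ) = 4*b := by
      rcases (adj_iff.mp d1.adj) with hA | hA
      · rcases hA.2 with ⟨hdiv, -⟩ | ⟨hz, hfr⟩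
        · have := hA.1; omega
        · exact absurd ⟨hz, hfr⟩ ((hnotwist d1 hd1W).1)
      · exact absurd hA.1 (by omega)
    -- backward boundary dart in q
    obtain ⟨d2, hd2, hd2f, hd2s⟩ := q.exists_boundary_dart {u : Fin (4*r+1) | (u : ℕ) < 4*b}ᶜ
      (by simp only [Set.mem_compl_iff, Set.mem_setOf_eq]; omega)
      (by simp only [Set.mem_compl_iff, Set.mem_setOf_eq]; omega)
    simp only [Set.mem_compl_iff, Set.mem_setOf_eq, not_not, not_lt] at hd2f hd2s
    have hd2W : d2 ∈ W'.darts := W'.darts_dropUntil_subset _ hd2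
    have h2fst : ((d2.fst : Fin (4*r+1)) : ℕ) = 4*b := by
      rcases (adj_iff.mp d2.adj) with hA | hA
      · exact absurd hA.1 (by omega)
      · rcases hA.2 with ⟨hdiv, -⟩ | ⟨hz, hfr⟩
        · have := hA.1; omega
        · exact absurd ⟨hfr, hz⟩ ((hnotwist d2 hd2W).2)
    -- the vertex 4b occurs in both halves: contradiction with Nodup
    have hz1 : d1.snd ∈ p.support := p.dart_snd_mem_support_of_mem_darts hd1
    have hz2 : d2.fst ∈ q.support := q.dart_fst_mem_support_of_mem_darts hd2
    have hzz : d1.snd = d2.fst := Fin.val_injective (by rw [h1snd, h2fst])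
    have hzx : d1.snd ≠ x := fun hc => by
      have := congrArg Fin.val hc
      rw [h1snd, hxval] at this
      omega
    have hzy : d1.snd ≠ y := fun hc => by
      have := congrArg Fin.val hc
      rw [h1snd, hyval] at this
      omega
    have hsupp : W'.support.tail = p.support.tail ++ q.support.tail := by
      conv_lhs => rw [← happ]
      rw [Walk.support_append]
      rw [p.support_eq_cons]
      simp
    rw [hsupp] at hnd'
    have hdisj := List.disjoint_of_nodup_append hnd'
    have hz1t : d1.snd ∈ p.support.tail := by
      have := p.support_eq_cons ▸ hz1
      rcases List.mem_cons.mp this with hc | hc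
      · exact absurd hc hzx
      · exact hc
    have hz2t : d1.snd ∈ q.support.tail := by
      rw [hzz]
      have := q.support_eq_cons ▸ hz2
      rcases List.mem_cons.mp this with hc | hc
      · rw [hzz] at hzy; exact absurd hc hzy
      · exact hc
    exact hdisj hz1t hz2t



end Stmt12

open Stmt12 in
/-- for every `k ≥ 6` and every `N`, there is a finite simple graph `G`
with at least `N` vertices, containing no `K₅` subgraph and no cycle of length `ℓ` for
any `6 ≤ ℓ ≤ k`, whose chromatic number is exactly `5` (in particular `G` is not
4-colorable and hence not 4-choosable). -/
theorem exists_no_K5_no_middle_cycles_chromatic_five (k : ℕ) (hk : 6 ≤ k) (N : ℕ) :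
    ∃ (n : ℕ) (G : SimpleGraph (Fin n)),
      N ≤ n ∧
      (¬ ∃ f : Fin 5 → Fin n, Function.Injective f ∧
        ∀ i j : Fin 5, i ≠ j → G.Adj (f i) (f j)) ∧
      (∀ ℓ : ℕ, 6 ≤ ℓ → ℓ ≤ k →
        ∀ (v : Fin n) (w : G.Walk v v), w.IsCycle → w.length ≠ ℓ) ∧
      G.chromaticNumber = 5 ∧
      ¬ G.Colorable 4 ∧
      ¬ ∀ L : Fin n → Finset ℕ, (∀ v, 4 ≤ (L v).card) →
        ∃ f : Fin n → ℕ, (∀ v, f v ∈ L v) ∧ ∀ x y, G.Adj x y → f x ≠ f y := by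
  set r := max (k+1) N with hrdef
  have hr7 : 7 ≤ r := le_trans (by omega) (le_max_left (k+1) N)
  have hrk : k + 1 ≤ r := le_max_left _ _
  have hrN : N ≤ r := le_max_right _ _
  have hnc4 : ¬ (gph r).Colorable 4 := not_colorable4 r (by omega)
  refine ⟨4*r+1, gph r, by omega, noK5 r hr7, ?_, ?_, hnc4, ?_⟩
  · intro ℓ h6 hℓk v w hc hlen
    rcases cycle_short_or_long r hr7 w hc with h | h <;> omega
  · apply le_antisymm
    · have := (colorable5 r (by omega)).chromaticNumber_le
      simpa using this
    · have hn : ¬ (gph r).chromaticNumber ≤ (4:ℕ) := fun hle =>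
        hnc4 (chromaticNumber_le_iff_colorable.mp hle)
      have hlt : ((4:ℕ) : ℕ∞) < (gph r).chromaticNumber := not_le.mp hn
      have := Order.add_one_le_of_lt hlt
      exact this
  · intro h
    obtain ⟨f, hf, hprop⟩ := h (fun _ => Finset.range 4) (by simp)
    apply hnc4
    refine ⟨Coloring.mk (fun v => ⟨f v, by simpa using hf v⟩) ?_⟩
    intro a b hadj hc
    exact hprop a b hadj (by simpa [Fin.mk.injEq] using hc)
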